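/- For all integers n ≥ 1, v₂(s(2^n, 2)) = 2^n - 2n, where s is the unsigned Stirling number of the first kind. -/

import Mathlib

open Polynomial Finset

/-- Unsigned Stirling number of the first kind: coefficient of `x^k` in
`x(x+1)⋯(x+n-1)`. -/
noncomputable def sF (n k : ℕ) : ℕ :=
  (∏ i ∈ Finset.range n, (X + C i : Polynomial ℕ)).coeff k

/-- The `m`-th Stirling number of the first kind: coefficient of `x^k` in
`(x+m)(x+m+1)⋯(x+m+n-1)`. -/
noncomputable def sM (m n k : ℕ) : ℕ :=
  (∏ i ∈ Finset.range n, (X + C (m + i) : Polynomial ℕ)).coeff k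

/-- `H n k`: the `k`-th elementary symmetric function of `1, 1/2, …, 1/n`. -/
def Hfun (n k : ℕ) : ℚ :=
  ((Finset.Icc 1 n).val.map (fun i => (1 : ℚ) / i)).esymm k

open Nat in
lemma key1 (m : ℕ) :
    (∏ i ∈ range m, (X + C ((i : ℚ) + 1))).coeff 1 = m ! * harmonic m := by
  induction m with
  | zero => simp [harmonic, Polynomial.coeff_one]
  | succ m ih =>
    rw [prod_range_succ]
    have hc0 : (∏ i ∈ range m, (X + C ((i : ℚ) + 1))).coeff 0 = (m ! : ℚ) := by
      rw [coeff_zero_eq_eval_zero]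
      simp only [eval_prod, eval_add, eval_X, eval_C, zero_add]
      push_cast [← Finset.prod_range_add_one_eq_factorial m]
      exact Finset.prod_congr rfl fun x _ => by ring
    have : (∏ i ∈ range m, (X + C ((i : ℚ) + 1))) * (X + C ((m : ℚ) + 1))
        = (∏ i ∈ range m, (X + C ((i : ℚ) + 1))) * X
          + C ((m : ℚ) + 1) * (∏ i ∈ range m, (X + C ((i : ℚ) + 1))) := by ring
    rw [this, coeff_add, coeff_mul_X, coeff_C_mul, hc0, ih, harmonic_succ]
    have hm1 : ((m : ℚ) + 1) ≠ 0 := by positivity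
    push_cast [Nat.factorial_succ]
    field_simp
    ring

open Nat in
lemma key2 (m : ℕ) : (sF (m + 1) 2 : ℚ) = (m ! : ℚ) * harmonic m := by
  have hcast : (sF (m + 1) 2 : ℚ)
      = (∏ i ∈ range (m + 1), (X + C (i : ℚ))).coeff 2 := by
    rw [sF]
    have h : ((((∏ i ∈ range (m+1), (X + C i : Polynomial ℕ))).coeff 2 : ℕ) : ℚ)
        = ((∏ i ∈ range (m+1), (X + C i : Polynomial ℕ)).map (Nat.castRingHom ℚ)).coeff 2 := by
      rw [Polynomial.coeff_map]; rfl
    rw [h, Polynomial.map_prod]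
    simp
  rw [hcast, Finset.prod_range_succ']
  have h0 : (X + C ((0 : ℕ) : ℚ)) = X := by simp
  push_cast at h0 ⊢
  rw [h0, coeff_mul_X, ← key1 m]

lemma dsum (n : ℕ) : (Nat.digits 2 (2 ^ n - 1)).sum = n := by
  induction n with
  | zero => simp
  | succ n ih =>
    have h1 : 1 ≤ 2 ^ n := Nat.one_le_two_pow
    have h2 : (2 : ℕ) ^ (n + 1) = 2 * 2 ^ n := by ring
    have hne : 2 ^ (n + 1) - 1 ≠ 0 := by omega
    rw [Nat.digits_def' (by norm_num : 1 < 2) (by omega : 0 < 2 ^ (n + 1) - 1)]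
    have hmod : (2 ^ (n + 1) - 1) % 2 = 1 := by omega
    have hdiv : (2 ^ (n + 1) - 1) / 2 = 2 ^ n - 1 := by omega
    rw [hmod, hdiv, List.sum_cons, ih]
    omega

theorem stmt16 (n : ℕ) (hn : 1 ≤ n) :
    (padicValNat 2 (sF (2 ^ n) 2) : ℤ) = 2 ^ n - 2 * (n : ℤ) := by
  have hnlt : n < 2 ^ n := Nat.lt_two_pow_self (n := n)
  set m : ℕ := 2 ^ n - 1 with hm
  have hN : 2 ^ n = m + 1 := by omega
  have hm0 : m ≠ 0 := by omega
  have hfac : ((Nat.factorial m) : ℚ) ≠ 0 := by exact_mod_cast (Nat.factorial_ne_zero m)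
  have hharm : harmonic m ≠ 0 := (harmonic_pos hm0).ne'
  have hval : (sF (2 ^ n) 2 : ℚ) = ((Nat.factorial m) : ℚ) * harmonic m := by rw [hN]; exact key2 m
  have hsne : sF (2 ^ n) 2 ≠ 0 := by
    intro h
    rw [h] at hval
    exact (mul_pos (show (0:ℚ) < (Nat.factorial m : ℚ) by exact_mod_cast Nat.factorial_pos m) (harmonic_pos hm0)).ne' (by exact_mod_cast hval.symm)
  have hlog : Nat.log 2 m = n - 1 := by
    apply Nat.log_eq_of_pow_le_of_lt_pow
    · have : 2 ^ (n - 1) < 2 ^ n := Nat.pow_lt_pow_right one_lt_two (by omega)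
      omega
    · have : (2:ℕ) ^ (n - 1 + 1) = 2 ^ n := by rw [Nat.sub_add_cancel hn]
      omega
  have hfacval : padicValNat 2 ((Nat.factorial m)) = m - n := by
    have := sub_one_mul_padicValNat_factorial (p := 2) m
    simpa [dsum, hm] using this
  have h1 : (padicValNat 2 (sF (2 ^ n) 2) : ℤ) = padicValRat 2 ((sF (2 ^ n) 2 : ℚ)) :=
    (padicValRat.of_nat).symm
  rw [h1, hval, padicValRat.mul hfac hharm, padicValRat_two_harmonic, hlog,
    padicValRat.of_nat, hfacval]
  have hmn : n ≤ m := by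
    rcases Nat.eq_or_lt_of_le hn with h | h
    · omega
    · have : 2 ^ 2 ≤ 2 ^ n := Nat.pow_le_pow_right (by norm_num) h
      omega
  have hpow : ((2 : ℤ) ^ n) = (m : ℤ) + 1 := by exact_mod_cast hN
  rw [hpow]
  push_cast [Nat.cast_sub hmn, Nat.cast_sub hn]
  omega
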